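/- Let t0, y0 ∈ ℝ, a, b, L > 0 with c = min{a, b/L}, I = [t0, t0+c], and let f : [t0,t0+a] × [y0−b, y0+b] → ℝ be continuous with |f| ≤ L on its domain. Then the set S of all differentiable functions φ : I → ℝ with φ(t0) = y0, values in [y0−b, y0+b], and φ'(t) = f(t, φ(t)) on I is a nonempty compact subset of the space C(I) of continuous real-valued functions on I with the supremum norm; moreover every φ ∈ S satisfies |φ(t) − φ(s)| ≤ L|t − s| for all s, t ∈ I. -/

import Mathlib

open Set MeasureTheory Filter

/-- Any continuous bounded function on a compact set can be uniformly approximated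
by globally Lipschitz functions (sup-convolution). -/
lemma exists_lipschitz_approx {s : Set (ℝ × ℝ)} (hs : IsCompact s) (hne : s.Nonempty)
    {F : ℝ × ℝ → ℝ} (hFc : ContinuousOn F s) {L : ℝ} (hL : 0 ≤ L)
    (hFb : ∀ p ∈ s, |F p| ≤ L) {ε : ℝ} (hε : 0 < ε) :
    ∃ (K : NNReal) (G : ℝ × ℝ → ℝ), LipschitzWith K G ∧ ∀ p ∈ s, |G p - F p| ≤ ε := by
  haveI : Nonempty s := hne.to_subtype
  obtain ⟨δ, hδ, hmod⟩ := Metric.uniformContinuousOn_iff.1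
    (hs.uniformContinuousOn_of_continuous hFc) ε hε
  set Kr : ℝ := 2 * L / δ with hKr
  have hKr0 : 0 ≤ Kr := by positivity
  set G : ℝ × ℝ → ℝ := fun p => ⨆ q : s, (F q - Kr * dist p q) with hG
  have hbdd : ∀ p : ℝ × ℝ, BddAbove (range fun q : s => F q - Kr * dist p q) := by
    intro p
    refine ⟨L, ?_⟩
    rintro x ⟨q, rfl⟩
    dsimp only
    have := (abs_le.1 (hFb q q.2)).2
    nlinarith [mul_nonneg hKr0 (dist_nonneg (x := p) (y := (q : ℝ × ℝ)))]
  have key : ∀ p p' : ℝ × ℝ, G p ≤ G p' + Kr * dist p p' := by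
    intro p p'
    refine ciSup_le fun q => ?_
    have h1 : F q - Kr * dist p' q ≤ G p' := le_ciSup (hbdd p') q
    have htri : dist p' (q : ℝ × ℝ) ≤ dist p' p + dist p (q : ℝ × ℝ) := dist_triangle _ _ _
    have : F q - Kr * dist p q ≤ F q - Kr * dist p' q + Kr * dist p p' := by
      rw [dist_comm p p']
      nlinarith
    linarith
  have hlip : LipschitzWith (Real.toNNReal Kr) G := by
    refine LipschitzWith.of_dist_le_mul fun p p' => ?_
    rw [Real.dist_eq, Real.coe_toNNReal _ hKr0, abs_le]
    constructor
    · have := key p' p; rw [dist_comm p' p] at this; linarith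
    · have := key p p'; linarith
  refine ⟨Real.toNNReal Kr, G, hlip, fun p hp => ?_⟩
  have hge : F p ≤ G p := by
    have := le_ciSup (hbdd p) (⟨p, hp⟩ : s)
    simpa using this
  have hle : G p ≤ F p + ε := by
    refine ciSup_le fun q => ?_
    rcases lt_or_ge (dist p (q : ℝ × ℝ)) δ with hd | hd
    · have := hmod p hp q q.2 hd
      rw [Real.dist_eq, abs_lt] at this
      nlinarith [mul_nonneg hKr0 (dist_nonneg (x := p) (y := (q : ℝ × ℝ)))]
    · have h2 : F (q : ℝ × ℝ) ≤ L := (abs_le.1 (hFb q q.2)).2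
      have h3 : -L ≤ F p := (abs_le.1 (hFb p hp)).1
      have h4 : Kr * δ = 2 * L := by rw [hKr, div_mul_cancel₀ _ hδ.ne']
      nlinarith
  rw [abs_le]; constructor <;> linarith

lemma clamp_lip (lo hi x y : ℝ) : |max lo (min x hi) - max lo (min y hi)| ≤ |x - y| := by
  rw [max_comm lo, max_comm lo]
  refine (abs_max_sub_max_le_abs _ _ _).trans ?_
  refine (abs_min_sub_min_le_max _ _ _ _).trans ?_
  simp

lemma clamp_abs_le {L z : ℝ} (hL : 0 ≤ L) : |max (-L) (min z L)| ≤ L := by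
  rw [abs_le]
  constructor
  · exact le_max_left _ _
  · exact max_le (by linarith) (min_le_right _ _)

/-- Existence of solutions for a (clamped) globally Lipschitz vector field,
via Picard–Lindelöf. -/
lemma approx_sol (t0 y0 b L c : ℝ) (hb : 0 < b) (hL : 0 < L) (hc : 0 ≤ c)
    (hLc : L * c ≤ b) (K : NNReal) (G : ℝ × ℝ → ℝ) (hG : LipschitzWith K G) :
    ∃ φ : ℝ → ℝ, φ t0 = y0 ∧
      (∀ s ∈ Icc t0 (t0 + c), ∀ t ∈ Icc t0 (t0 + c), |φ t - φ s| ≤ L * |t - s|) ∧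
      (∀ t ∈ Icc t0 (t0 + c), φ t ∈ Icc (y0 - b) (y0 + b)) ∧
      (∀ t ∈ Icc t0 (t0 + c),
        HasDerivWithinAt φ
          (max (-L) (min (G (t, max (y0 - b) (min (φ t) (y0 + b)))) L))
          (Icc t0 (t0 + c)) t) := by
  have hle : t0 ≤ t0 + c := by linarith
  set v : ℝ → ℝ → ℝ := fun t x => max (-L) (min (G (t, max (y0 - b) (min x (y0 + b)))) L)
    with hv
  have hvb : ∀ t x, |v t x| ≤ L := fun t x => clamp_abs_le hL.le
  have hvlip : ∀ t, LipschitzWith K (v t) := by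
    intro t
    refine LipschitzWith.of_dist_le_mul fun x y => ?_
    simp only [Real.dist_eq, hv]
    refine (clamp_lip _ _ _ _).trans ?_
    have h1 : dist (G (t, max (y0 - b) (min x (y0 + b)))) (G (t, max (y0 - b) (min y (y0 + b))))
        ≤ K * dist ((t, max (y0 - b) (min x (y0 + b))) : ℝ × ℝ)
          (t, max (y0 - b) (min y (y0 + b))) := hG.dist_le_mul _ _
    rw [Real.dist_eq] at h1
    refine h1.trans ?_
    have h2 : dist ((t, max (y0 - b) (min x (y0 + b))) : ℝ × ℝ)
        (t, max (y0 - b) (min y (y0 + b))) ≤ |x - y| := by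
      rw [Prod.dist_eq]
      refine max_le (by simp [abs_nonneg]) ?_
      rw [Real.dist_eq]
      exact clamp_lip _ _ _ _
    have hK : (0:ℝ) ≤ K := K.2
    nlinarith
  have hvcont : Continuous fun p : ℝ × ℝ => v p.1 p.2 := by
    have : Continuous fun p : ℝ × ℝ =>
        G (p.1, max (y0 - b) (min p.2 (y0 + b))) :=
      hG.continuous.comp (by fun_prop)
    simp only [hv]
    exact continuous_const.max (this.min continuous_const)
  have hpl : IsPicardLindelof v (tmin := t0) (tmax := t0 + c) ⟨t0, left_mem_Icc.2 hle⟩ y0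
      ⟨b, hb.le⟩ 0 ⟨L, hL.le⟩ K :=
    { lipschitzOnWith := fun t _ => (hvlip t).lipschitzOnWith
      continuousOn := fun x _ => (hvcont.comp (continuous_id.prodMk continuous_const)).continuousOn
      norm_le := fun t _ x _ => by
        rw [Real.norm_eq_abs]; exact hvb t x
      mul_max_le := by
        show L * max (t0 + c - t0) (t0 - t0) ≤ b - 0
        rw [add_sub_cancel_left, sub_self, max_eq_left hc, sub_zero]
        exact hLc }
  obtain ⟨φ, hφ0', hφder⟩ := hpl.exists_eq_forall_mem_Icc_hasDerivWithinAt₀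
  have hφ0 : φ t0 = y0 := hφ0'
  have hlip : ∀ s ∈ Icc t0 (t0 + c), ∀ t ∈ Icc t0 (t0 + c), |φ t - φ s| ≤ L * |t - s| := by
    intro s hs t ht
    have := Convex.norm_image_sub_le_of_norm_hasDerivWithin_le
      (f := φ) (f' := fun t => v t (φ t)) (s := Icc t0 (t0 + c)) (C := L)
      hφder (fun x _ => by rw [Real.norm_eq_abs]; exact hvb x (φ x))
      (convex_Icc _ _) hs ht
    simpa [Real.norm_eq_abs] using this
  have hbox : ∀ t ∈ Icc t0 (t0 + c), φ t ∈ Icc (y0 - b) (y0 + b) := by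
    intro t ht
    have h1 := hlip t0 (left_mem_Icc.2 hle) t ht
    rw [hφ0, abs_of_nonneg (by linarith [ht.1] : (0:ℝ) ≤ t - t0)] at h1
    have h2 : L * (t - t0) ≤ L * c := by
      have := ht.2; nlinarith
    have := abs_le.1 (h1.trans (h2.trans hLc))
    constructor <;> linarith [this.1, this.2]
  exact ⟨φ, hφ0, hlip, hbox, hφder⟩

/-- FTC2 direction: a solution of the ODE satisfies the integral equation. -/
lemma sol_integral {t0 y0 b c : ℝ}
    {f : ℝ → ℝ → ℝ}
    (hf : ContinuousOn (fun p : ℝ × ℝ => f p.1 p.2)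
      (Icc t0 (t0 + c) ×ˢ Icc (y0 - b) (y0 + b)))
    {φ : ℝ → ℝ} (hφ0 : φ t0 = y0)
    (hbox : ∀ t ∈ Icc t0 (t0 + c), φ t ∈ Icc (y0 - b) (y0 + b))
    (hder : ∀ t ∈ Icc t0 (t0 + c), HasDerivWithinAt φ (f t (φ t)) (Icc t0 (t0 + c)) t) :
    ∀ t ∈ Icc t0 (t0 + c), φ t = y0 + ∫ s in t0..t, f s (φ s) := by
  have hφcont : ContinuousOn φ (Icc t0 (t0 + c)) :=
    fun x hx => (hder x hx).continuousWithinAt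
  have hGcont : ContinuousOn (fun s => f s (φ s)) (Icc t0 (t0 + c)) := by
    have : ContinuousOn (fun s => ((s, φ s) : ℝ × ℝ)) (Icc t0 (t0 + c)) :=
      continuousOn_id.prodMk hφcont
    exact hf.comp this fun s hs => ⟨hs, hbox s hs⟩
  intro t ht
  have hsub : Icc t0 t ⊆ Icc t0 (t0 + c) := Icc_subset_Icc le_rfl ht.2
  have key : ∫ s in t0..t, f s (φ s) = φ t - φ t0 := by
    apply intervalIntegral.integral_eq_sub_of_hasDeriv_right_of_le ht.1
      (hφcont.mono hsub)
    · intro x hx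
      have hx' : x ∈ Icc t0 (t0 + c) := hsub (Ioo_subset_Icc_self hx)
      have hmem : Icc t0 (t0 + c) ∈ nhds x :=
        Icc_mem_nhds hx.1 (lt_of_lt_of_le hx.2 ht.2)
      exact ((hder x hx').hasDerivAt hmem).hasDerivWithinAt
    · exact (hGcont.mono (by rw [uIcc_of_le ht.1]; exact hsub)).intervalIntegrable
  rw [key, hφ0]; ring

/-- FTC1 direction: a continuous solution of the integral equation solves the ODE. -/
lemma integral_sol {t0 y0 b c : ℝ} (hle : t0 ≤ t0 + c)
    {f : ℝ → ℝ → ℝ}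
    (hf : ContinuousOn (fun p : ℝ × ℝ => f p.1 p.2)
      (Icc t0 (t0 + c) ×ˢ Icc (y0 - b) (y0 + b)))
    (ψ : C(Icc t0 (t0 + c), ℝ))
    (hψbox : ∀ t : Icc t0 (t0 + c), (ψ t : ℝ) ∈ Icc (y0 - b) (y0 + b))
    (heq : ∀ t : Icc t0 (t0 + c), (ψ t : ℝ) = y0 +
      ∫ s in t0..(t : ℝ), f (projIcc t0 (t0 + c) hle s : ℝ) (ψ (projIcc t0 (t0 + c) hle s))) :
    ∃ φ : ℝ → ℝ,
      (φ t0 = y0 ∧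
        (∀ t ∈ Icc t0 (t0 + c), φ t ∈ Icc (y0 - b) (y0 + b)) ∧
        (∀ t ∈ Icc t0 (t0 + c),
          HasDerivWithinAt φ (f t (φ t)) (Icc t0 (t0 + c)) t)) ∧
      ∀ t : Icc t0 (t0 + c), ψ t = φ t := by
  set φ : ℝ → ℝ := fun s => ψ (projIcc t0 (t0 + c) hle s) with hφ
  set G : ℝ → ℝ := fun s => f (projIcc t0 (t0 + c) hle s : ℝ) (φ s) with hGdef
  have hφcont : Continuous φ := ψ.continuous.comp continuous_projIcc
  have hGcont : Continuous G := by
    have hinner : Continuous (fun s => (((projIcc t0 (t0 + c) hle s : ℝ), φ s) : ℝ × ℝ)) :=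
      (continuous_subtype_val.comp continuous_projIcc).prodMk hφcont
    exact hf.comp_continuous hinner fun s => ⟨(projIcc t0 (t0 + c) hle s).2, hψbox _⟩
  have hφeq : ∀ u ∈ Icc t0 (t0 + c), φ u = y0 + ∫ s in t0..u, G s := by
    intro u hu
    have := heq ⟨u, hu⟩
    simpa [hφ, projIcc_of_mem hle hu] using this
  have hψφ : ∀ t : Icc t0 (t0 + c), (ψ t : ℝ) = φ t := by
    intro t
    simp [hφ, projIcc_of_mem hle t.2]
  refine ⟨φ, ⟨?_, fun t ht => hψbox _, fun t ht => ?_⟩, hψφ⟩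
  · have := hφeq t0 (left_mem_Icc.2 hle)
    simpa using this
  · haveI : Fact (t ∈ Icc t0 (t0 + c)) := ⟨ht⟩
    have h1 : HasDerivWithinAt (fun u => y0 + ∫ s in t0..u, G s) (G t)
        (Icc t0 (t0 + c)) t := by
      refine HasDerivWithinAt.const_add _ ?_
      exact intervalIntegral.integral_hasDerivWithinAt_right
        (hGcont.intervalIntegrable _ _)
        (hGcont.stronglyMeasurableAtFilter _ _)
        hGcont.continuousWithinAt
    have h2 : HasDerivWithinAt φ (G t) (Icc t0 (t0 + c)) t :=
      h1.congr (fun u hu => hφeq u hu) (hφeq t ht)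
    have h3 : G t = f t (φ t) := by
      simp [hGdef, projIcc_of_mem hle ht]
    rwa [h3] at h2

lemma tendsto_int {t0 y0 b L c : ℝ} (hle : t0 ≤ t0 + c) (hL : 0 ≤ L)
    {f : ℝ → ℝ → ℝ}
    (hf : ContinuousOn (fun p : ℝ × ℝ => f p.1 p.2)
      (Icc t0 (t0 + c) ×ˢ Icc (y0 - b) (y0 + b)))
    {t : ℝ} (ht : t ∈ Icc t0 (t0 + c))
    (χn : ℕ → C(Icc t0 (t0 + c), ℝ)) (χ : C(Icc t0 (t0 + c), ℝ))
    (hboxn : ∀ n u, χn n u ∈ Icc (y0 - b) (y0 + b))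
    (hbox : ∀ u, χ u ∈ Icc (y0 - b) (y0 + b))
    (htend : Tendsto χn atTop (nhds χ))
    (vn : ℕ → ℝ → ℝ → ℝ) (e : ℕ → ℝ) (he : Tendsto e atTop (nhds 0))
    (hverr : ∀ n, ∀ s ∈ Icc t0 (t0 + c), ∀ x ∈ Icc (y0 - b) (y0 + b),
      |vn n s x - f s x| ≤ e n)
    (hvb : ∀ n, ∀ s ∈ Icc t0 (t0 + c), ∀ x ∈ Icc (y0 - b) (y0 + b), |vn n s x| ≤ L)
    (hm : ∀ n, Continuous fun s =>
      vn n (projIcc t0 (t0 + c) hle s : ℝ) (χn n (projIcc t0 (t0 + c) hle s))) :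
    Tendsto (fun n => ∫ s in t0..t,
        vn n (projIcc t0 (t0 + c) hle s : ℝ) (χn n (projIcc t0 (t0 + c) hle s)))
      atTop
      (nhds (∫ s in t0..t, f (projIcc t0 (t0 + c) hle s : ℝ) (χ (projIcc t0 (t0 + c) hle s)))) := by
  set Pj := projIcc t0 (t0 + c) hle with hPj
  apply intervalIntegral.tendsto_integral_filter_of_dominated_convergence (fun _ => L)
  · exact Eventually.of_forall fun n => (hm n).aestronglyMeasurable
  · refine Eventually.of_forall fun n => ae_of_all _ fun s _ => ?_
    rw [Real.norm_eq_abs]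
    exact hvb n _ (Pj s).2 _ (hboxn n _)
  · exact intervalIntegrable_const
  · refine ae_of_all _ fun s _ => ?_
    -- pointwise convergence
    have h1 : Tendsto (fun n => χn n (Pj s)) atTop (nhds (χ (Pj s))) :=
      ((continuous_eval_const (Pj s)).tendsto χ).comp htend
    have h2 : Tendsto (fun n => (((Pj s : ℝ), χn n (Pj s))) : ℕ → ℝ × ℝ) atTop
        (nhdsWithin ((Pj s : ℝ), χ (Pj s)) (Icc t0 (t0 + c) ×ˢ Icc (y0 - b) (y0 + b))) := by
      rw [tendsto_nhdsWithin_iff]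
      exact ⟨by rw [nhds_prod_eq]; exact tendsto_const_nhds.prodMk h1,
        Eventually.of_forall fun n => ⟨(Pj s).2, hboxn n _⟩⟩
    have h3 : Tendsto (fun n => f (Pj s : ℝ) (χn n (Pj s))) atTop
        (nhds (f (Pj s : ℝ) (χ (Pj s)))) :=
      (hf ((Pj s : ℝ), χ (Pj s)) ⟨(Pj s).2, hbox _⟩).tendsto.comp h2
    rw [tendsto_iff_dist_tendsto_zero]
    apply squeeze_zero (fun n => dist_nonneg)
      (g := fun n => |e n| + dist (f (Pj s : ℝ) (χn n (Pj s))) (f (Pj s : ℝ) (χ (Pj s))))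
    · intro n
      have hd : dist (vn n (Pj s : ℝ) (χn n (Pj s))) (f (Pj s : ℝ) (χn n (Pj s))) ≤ |e n| :=
        (Real.dist_eq _ _ ▸ hverr n _ (Pj s).2 _ (hboxn n _)).trans (le_abs_self _)
      calc dist (vn n (Pj s : ℝ) (χn n (Pj s))) (f (Pj s : ℝ) (χ (Pj s)))
          ≤ dist (vn n (Pj s : ℝ) (χn n (Pj s))) (f (Pj s : ℝ) (χn n (Pj s)))
            + dist (f (Pj s : ℝ) (χn n (Pj s))) (f (Pj s : ℝ) (χ (Pj s))) := dist_triangle _ _ _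
        _ ≤ |e n| + dist (f (Pj s : ℝ) (χn n (Pj s))) (f (Pj s : ℝ) (χ (Pj s))) := by
            exact add_le_add_left hd _
    · have : Tendsto (fun n => dist (f (Pj s : ℝ) (χn n (Pj s))) (f (Pj s : ℝ) (χ (Pj s))))
          atTop (nhds 0) := tendsto_iff_dist_tendsto_zero.1 h3
      simpa using (he.abs.add this)

lemma clamp_field_cont (L lo hi : ℝ) {K : NNReal} {G : ℝ × ℝ → ℝ} (hG : LipschitzWith K G) :
    Continuous fun p : ℝ × ℝ => max (-L) (min (G (p.1, max lo (min p.2 hi))) L) := by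
  have : Continuous fun p : ℝ × ℝ => G (p.1, max lo (min p.2 hi)) :=
    hG.continuous.comp (by fun_prop)
  exact continuous_const.max (this.min continuous_const)

lemma intSol {t0 y0 b c : ℝ} (hle : t0 ≤ t0 + c) {v : ℝ → ℝ → ℝ}
    (hv : ContinuousOn (fun p : ℝ × ℝ => v p.1 p.2)
      (Icc t0 (t0 + c) ×ˢ Icc (y0 - b) (y0 + b)))
    (φ : ℝ → ℝ) (ψ : C(Icc t0 (t0 + c), ℝ))
    (hφ0 : φ t0 = y0) (hbox : ∀ u ∈ Icc t0 (t0 + c), φ u ∈ Icc (y0 - b) (y0 + b))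
    (hder : ∀ u ∈ Icc t0 (t0 + c), HasDerivWithinAt φ (v u (φ u)) (Icc t0 (t0 + c)) u)
    (hψφ : ∀ u : Icc t0 (t0 + c), (ψ u : ℝ) = φ u) :
    ∀ t : Icc t0 (t0 + c), (ψ t : ℝ) = y0 + ∫ s in t0..(t : ℝ),
      v (projIcc t0 (t0 + c) hle s : ℝ) (ψ (projIcc t0 (t0 + c) hle s)) := by
  intro t
  have h1 := sol_integral hv hφ0 hbox hder t t.2
  rw [hψφ t, h1]
  congr 1
  refine intervalIntegral.integral_congr fun s hs => ?_
  rw [uIcc_of_le t.2.1] at hs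
  have hsI : s ∈ Icc t0 (t0 + c) := Icc_subset_Icc le_rfl t.2.2 hs
  rw [projIcc_of_mem hle hsI, hψφ ⟨s, hsI⟩]
/-- The solution set of the IVP. -/
theorem solution_set_compact (t0 y0 a b L : ℝ)
    (ha : 0 < a) (hb : 0 < b) (hL : 0 < L)
    (c : ℝ) (hc : c = min a (b / L))
    (f : ℝ → ℝ → ℝ)
    (hf : ContinuousOn (fun p : ℝ × ℝ => f p.1 p.2)
      (Icc t0 (t0 + a) ×ˢ Icc (y0 - b) (y0 + b)))
    (hfL : ∀ t ∈ Icc t0 (t0 + a), ∀ y ∈ Icc (y0 - b) (y0 + b), |f t y| ≤ L)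
    (S : Set C(Icc t0 (t0 + c), ℝ))
    (hS : S = {ψ : C(Icc t0 (t0 + c), ℝ) | ∃ φ : ℝ → ℝ,
      (φ t0 = y0 ∧
        (∀ t ∈ Icc t0 (t0 + c), φ t ∈ Icc (y0 - b) (y0 + b)) ∧
        (∀ t ∈ Icc t0 (t0 + c),
          HasDerivWithinAt φ (f t (φ t)) (Icc t0 (t0 + c)) t)) ∧
      ∀ t : Icc t0 (t0 + c), ψ t = φ t}) :
    S.Nonempty ∧ IsCompact S ∧
      ∀ ψ ∈ S, ∀ s t : Icc t0 (t0 + c),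
        |ψ t - ψ s| ≤ L * |(t : ℝ) - (s : ℝ)| := by
  subst hS
  have hc0 : 0 < c := hc ▸ lt_min ha (div_pos hb hL)
  have hca : c ≤ a := hc ▸ min_le_left _ _
  have hLc : L * c ≤ b := by
    have h1 : c ≤ b / L := hc ▸ min_le_right _ _
    rw [mul_comm]
    exact (le_div_iff₀ hL).1 h1
  have hle : t0 ≤ t0 + c := by linarith
  have hby : y0 - b ≤ y0 + b := by linarith
  have hsubI : Icc t0 (t0 + c) ⊆ Icc t0 (t0 + a) := Icc_subset_Icc le_rfl (by linarith)
  have hf' : ContinuousOn (fun p : ℝ × ℝ => f p.1 p.2)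
      (Icc t0 (t0 + c) ×ˢ Icc (y0 - b) (y0 + b)) :=
    hf.mono (prod_mono hsubI Subset.rfl)
  have hfL' : ∀ s ∈ Icc t0 (t0 + c), ∀ x ∈ Icc (y0 - b) (y0 + b), |f s x| ≤ L :=
    fun s hs x hx => hfL s (hsubI hs) x hx
  -- every solution is L-Lipschitz
  have lipS : ∀ ψ : C(Icc t0 (t0 + c), ℝ), (∃ φ : ℝ → ℝ,
      (φ t0 = y0 ∧
        (∀ t ∈ Icc t0 (t0 + c), φ t ∈ Icc (y0 - b) (y0 + b)) ∧
        (∀ t ∈ Icc t0 (t0 + c),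
          HasDerivWithinAt φ (f t (φ t)) (Icc t0 (t0 + c)) t)) ∧
      ∀ t : Icc t0 (t0 + c), ψ t = φ t) →
      ∀ s t : Icc t0 (t0 + c), |ψ t - ψ s| ≤ L * |(t : ℝ) - (s : ℝ)| := by
    rintro ψ ⟨φ, ⟨hφ0, hbox, hder⟩, hψφ⟩ s t
    have := Convex.norm_image_sub_le_of_norm_hasDerivWithin_le
      (f := φ) (f' := fun u => f u (φ u)) (s := Icc t0 (t0 + c)) (C := L)
      hder (fun x hx => by rw [Real.norm_eq_abs]; exact hfL' x hx _ (hbox x hx))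
      (convex_Icc _ _) s.2 t.2
    rw [hψφ s, hψφ t]
    simpa [Real.norm_eq_abs] using this
  have boxS : ∀ ψ : C(Icc t0 (t0 + c), ℝ), (∃ φ : ℝ → ℝ,
      (φ t0 = y0 ∧
        (∀ t ∈ Icc t0 (t0 + c), φ t ∈ Icc (y0 - b) (y0 + b)) ∧
        (∀ t ∈ Icc t0 (t0 + c),
          HasDerivWithinAt φ (f t (φ t)) (Icc t0 (t0 + c)) t)) ∧
      ∀ t : Icc t0 (t0 + c), ψ t = φ t) →
      ∀ u : Icc t0 (t0 + c), (ψ u : ℝ) ∈ Icc (y0 - b) (y0 + b) := by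
    rintro ψ ⟨φ, ⟨hφ0, hbox, hder⟩, hψφ⟩ u
    rw [hψφ u]
    exact hbox u u.2
  -- The compact "ambient" set T
  set T : Set C(Icc t0 (t0 + c), ℝ) := {ψ | (∀ u, (ψ u : ℝ) ∈ Icc (y0 - b) (y0 + b)) ∧
      ∀ s t : Icc t0 (t0 + c), |ψ t - ψ s| ≤ L * |(t : ℝ) - (s : ℝ)|} with hT
  have hTcomp : IsCompact T := by
    apply ArzelaAscoli.isCompact_of_equicontinuous
    · have himg : ContinuousMap.toFun '' T = {g : Icc t0 (t0 + c) → ℝ |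
          (∀ u, g u ∈ Icc (y0 - b) (y0 + b)) ∧
          ∀ s t : Icc t0 (t0 + c), |g t - g s| ≤ L * |(t : ℝ) - (s : ℝ)|} := by
        ext g
        constructor
        · rintro ⟨ψ, hψ, rfl⟩
          exact hψ
        · rintro ⟨h1, h2⟩
          have hgl : LipschitzWith ⟨L, hL.le⟩ g := by
            refine LipschitzWith.of_dist_le_mul fun s t => ?_
            rw [Subtype.dist_eq, Real.dist_eq, Real.dist_eq]
            exact h2 t s
          exact ⟨⟨g, hgl.continuous⟩, ⟨h1, h2⟩, rfl⟩
      rw [himg]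
      apply IsCompact.of_isClosed_subset (isCompact_univ_pi fun u => isCompact_Icc)
      · rw [setOf_and]
        apply IsClosed.inter
        · rw [setOf_forall]
          exact isClosed_iInter fun u => isClosed_Icc.preimage (continuous_apply u)
        · rw [setOf_forall]
          refine isClosed_iInter fun s => ?_
          rw [setOf_forall]
          refine isClosed_iInter fun t => ?_
          exact isClosed_le (((continuous_apply t).sub (continuous_apply s)).abs)
            continuous_const
      · intro g hg u _
        exact hg.1 u
    · apply Metric.equicontinuous_of_continuity_modulus (fun r => L * r)
      · have : Filter.Tendsto (fun r : ℝ => L * r) (nhds 0) (nhds (L * 0)) :=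
          (continuous_const.mul continuous_id).tendsto 0
        simpa using this
      · rintro x y ⟨ψ, hψ⟩
        rw [Subtype.dist_eq, Real.dist_eq, Real.dist_eq]
        exact hψ.2 y x
  have hSsubT : {ψ : C(Icc t0 (t0 + c), ℝ) | ∃ φ : ℝ → ℝ,
      (φ t0 = y0 ∧
        (∀ t ∈ Icc t0 (t0 + c), φ t ∈ Icc (y0 - b) (y0 + b)) ∧
        (∀ t ∈ Icc t0 (t0 + c),
          HasDerivWithinAt φ (f t (φ t)) (Icc t0 (t0 + c)) t)) ∧
      ∀ t : Icc t0 (t0 + c), ψ t = φ t} ⊆ T :=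
    fun ψ hψ => ⟨boxS ψ hψ, lipS ψ hψ⟩
  -- closedness
  have hSclosed : IsClosed {ψ : C(Icc t0 (t0 + c), ℝ) | ∃ φ : ℝ → ℝ,
      (φ t0 = y0 ∧
        (∀ t ∈ Icc t0 (t0 + c), φ t ∈ Icc (y0 - b) (y0 + b)) ∧
        (∀ t ∈ Icc t0 (t0 + c),
          HasDerivWithinAt φ (f t (φ t)) (Icc t0 (t0 + c)) t)) ∧
      ∀ t : Icc t0 (t0 + c), ψ t = φ t} := by
    apply IsSeqClosed.isClosed
    intro ψn ψ hmem htend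
    have hboxn : ∀ n u, (ψn n u : ℝ) ∈ Icc (y0 - b) (y0 + b) :=
      fun n u => boxS _ (hmem n) u
    have hboxψ : ∀ u, (ψ u : ℝ) ∈ Icc (y0 - b) (y0 + b) := by
      intro u
      have h1 : Filter.Tendsto (fun n => (ψn n u : ℝ)) Filter.atTop (nhds (ψ u)) :=
        ((continuous_eval_const u).tendsto ψ).comp htend
      exact isClosed_Icc.mem_of_tendsto h1 (Filter.Eventually.of_forall fun n => hboxn n u)
    have hidn : ∀ n, ∀ t : Icc t0 (t0 + c), (ψn n t : ℝ) = y0 + ∫ s in t0..(t : ℝ),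
        f (projIcc t0 (t0 + c) hle s : ℝ) (ψn n (projIcc t0 (t0 + c) hle s)) := by
      intro n
      obtain ⟨φ, ⟨hφ0, hbox, hder⟩, hψφ⟩ := hmem n
      exact intSol hle hf' φ (ψn n) hφ0 hbox hder hψφ
    have hlim : ∀ t : Icc t0 (t0 + c), (ψ t : ℝ) = y0 + ∫ s in t0..(t : ℝ),
        f (projIcc t0 (t0 + c) hle s : ℝ) (ψ (projIcc t0 (t0 + c) hle s)) := by
      intro t
      have h1 : Filter.Tendsto (fun n => (ψn n t : ℝ)) Filter.atTop (nhds (ψ t)) :=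
        ((continuous_eval_const t).tendsto ψ).comp htend
      have hm : ∀ n, Continuous fun s => f (projIcc t0 (t0 + c) hle s : ℝ)
          (ψn n (projIcc t0 (t0 + c) hle s)) := by
        intro n
        have hinner : Continuous (fun s : ℝ => (((projIcc t0 (t0 + c) hle s : ℝ),
            (ψn n (projIcc t0 (t0 + c) hle s) : ℝ)) : ℝ × ℝ)) :=
          (continuous_subtype_val.comp continuous_projIcc).prodMk
            ((ψn n).continuous.comp continuous_projIcc)
        exact hf'.comp_continuous hinner fun s => ⟨(projIcc t0 (t0 + c) hle s).2, hboxn n _⟩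
      have h2 := tendsto_int hle hL.le hf' t.2 ψn ψ hboxn hboxψ htend
        (fun _ => f) (fun _ => (0 : ℝ)) tendsto_const_nhds
        (fun n s hs x hx => by simp) (fun n s hs x hx => hfL' s hs x hx) hm
      have h3 := (h2.const_add y0).congr fun n => (hidn n t).symm
      exact tendsto_nhds_unique h1 h3
    exact integral_sol hle hf' ψ hboxψ hlim
  have hScomp : IsCompact {ψ : C(Icc t0 (t0 + c), ℝ) | ∃ φ : ℝ → ℝ,
      (φ t0 = y0 ∧
        (∀ t ∈ Icc t0 (t0 + c), φ t ∈ Icc (y0 - b) (y0 + b)) ∧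
        (∀ t ∈ Icc t0 (t0 + c),
          HasDerivWithinAt φ (f t (φ t)) (Icc t0 (t0 + c)) t)) ∧
      ∀ t : Icc t0 (t0 + c), ψ t = φ t} :=
    hTcomp.of_isClosed_subset hSclosed hSsubT
  -- Nonemptiness via Lipschitz approximation and Picard–Lindelöf
  have hcompbox : IsCompact (Icc t0 (t0 + c) ×ˢ Icc (y0 - b) (y0 + b)) :=
    isCompact_Icc.prod isCompact_Icc
  have hnebox : (Icc t0 (t0 + c) ×ˢ Icc (y0 - b) (y0 + b)).Nonempty :=
    (nonempty_Icc.2 hle).prod (nonempty_Icc.2 hby)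
  have happrox : ∀ n : ℕ, ∃ (K : NNReal) (G : ℝ × ℝ → ℝ), LipschitzWith K G ∧
      ∀ p ∈ Icc t0 (t0 + c) ×ˢ Icc (y0 - b) (y0 + b),
        |G p - (fun p : ℝ × ℝ => f p.1 p.2) p| ≤ 1 / (n + 1 : ℝ) :=
    fun n => exists_lipschitz_approx hcompbox hnebox hf' hL.le
      (fun p hp => hfL' p.1 hp.1 p.2 hp.2) (by positivity)
  choose K G hGlip hGerr using happrox
  have hsol := fun n => approx_sol t0 y0 b L c hb hL hc0.le hLc (K n) (G n) (hGlip n)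
  choose φ hφ0 hφlip hφbox hφder using hsol
  have hψcont : ∀ n, Continuous (fun u : Icc t0 (t0 + c) => φ n u) := by
    intro n
    have hgl : LipschitzWith ⟨L, hL.le⟩ (fun u : Icc t0 (t0 + c) => φ n u) := by
      refine LipschitzWith.of_dist_le_mul fun s t => ?_
      rw [Subtype.dist_eq, Real.dist_eq, Real.dist_eq]
      exact hφlip n t t.2 s s.2
    exact hgl.continuous
  set ψs : ℕ → C(Icc t0 (t0 + c), ℝ) := fun n => ⟨fun u => φ n u, hψcont n⟩ with hψs
  set vf : ℕ → ℝ → ℝ → ℝ := fun n t x =>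
    max (-L) (min (G n (t, max (y0 - b) (min x (y0 + b)))) L) with hvf
  have hvcont : ∀ n, Continuous (fun p : ℝ × ℝ => vf n p.1 p.2) :=
    fun n => clamp_field_cont L (y0 - b) (y0 + b) (hGlip n)
  have hvb : ∀ n s x, |vf n s x| ≤ L := fun n s x => clamp_abs_le hL.le
  have hverr : ∀ n, ∀ s ∈ Icc t0 (t0 + c), ∀ x ∈ Icc (y0 - b) (y0 + b),
      |vf n s x - f s x| ≤ 1 / (n + 1 : ℝ) := by
    intro n s hs x hx
    have hclampx : max (y0 - b) (min x (y0 + b)) = x := by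
      rw [min_eq_left hx.2, max_eq_right hx.1]
    have hfx : max (-L) (min (f s x) L) = f s x := by
      have h := abs_le.1 (hfL' s hs x hx)
      rw [min_eq_left h.2, max_eq_right h.1]
    calc |vf n s x - f s x|
        = |max (-L) (min (G n (s, x)) L) - max (-L) (min (f s x) L)| := by
          rw [hvf]; simp only []; rw [hclampx, hfx]
      _ ≤ |G n (s, x) - f s x| := clamp_lip _ _ _ _
      _ ≤ 1 / (n + 1 : ℝ) := hGerr n (s, x) ⟨hs, hx⟩
  have hidn : ∀ n, ∀ t : Icc t0 (t0 + c), (ψs n t : ℝ) = y0 + ∫ s in t0..(t : ℝ),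
      vf n (projIcc t0 (t0 + c) hle s : ℝ) (ψs n (projIcc t0 (t0 + c) hle s)) :=
    fun n => intSol hle ((hvcont n).continuousOn) (φ n) (ψs n) (hφ0 n) (hφbox n)
      (hφder n) (fun u => rfl)
  have hmemT : ∀ n, ψs n ∈ T :=
    fun n => ⟨fun u => hφbox n u u.2, fun s t => hφlip n s s.2 t t.2⟩
  obtain ⟨ψl, hψlT, σ, hσ, hσtend⟩ := hTcomp.tendsto_subseq hmemT
  have hboxσ : ∀ k u, ((ψs (σ k)) u : ℝ) ∈ Icc (y0 - b) (y0 + b) :=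
    fun k u => hφbox (σ k) u u.2
  have he : Filter.Tendsto (fun k => 1 / ((σ k : ℝ) + 1)) Filter.atTop (nhds 0) :=
    tendsto_one_div_add_atTop_nhds_zero_nat.comp hσ.tendsto_atTop
  have hm : ∀ k, Continuous fun s => vf (σ k) (projIcc t0 (t0 + c) hle s : ℝ)
      (ψs (σ k) (projIcc t0 (t0 + c) hle s)) := by
    intro k
    have hinner : Continuous (fun s : ℝ => (((projIcc t0 (t0 + c) hle s : ℝ),
        (ψs (σ k) (projIcc t0 (t0 + c) hle s) : ℝ)) : ℝ × ℝ)) :=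
      (continuous_subtype_val.comp continuous_projIcc).prodMk
        ((ψs (σ k)).continuous.comp continuous_projIcc)
    exact (hvcont (σ k)).comp hinner
  have hlim : ∀ t : Icc t0 (t0 + c), (ψl t : ℝ) = y0 + ∫ s in t0..(t : ℝ),
      f (projIcc t0 (t0 + c) hle s : ℝ) (ψl (projIcc t0 (t0 + c) hle s)) := by
    intro t
    have h2 := tendsto_int hle hL.le hf' t.2 (fun k => ψs (σ k)) ψl hboxσ hψlT.1 hσtend
      (fun k => vf (σ k)) (fun k => 1 / ((σ k : ℝ) + 1)) he
      (fun k => hverr (σ k)) (fun k s hs x hx => hvb (σ k) s x) hm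
    have h1 : Filter.Tendsto (fun k => (ψs (σ k) t : ℝ)) Filter.atTop (nhds (ψl t)) :=
      ((continuous_eval_const t).tendsto ψl).comp hσtend
    have h3 := (h2.const_add y0).congr fun k => (hidn (σ k) t).symm
    exact tendsto_nhds_unique h1 h3
  refine ⟨⟨ψl, ?_⟩, hScomp, fun ψ hψ s t => lipS ψ hψ s t⟩
  exact integral_sol hle hf' ψl hψlT.1 hlim
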